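/- For every natural number k, one has C(2k, 1, k) = (3k + 2) · Catalan(k), where Catalan(k) is the k-th Catalan number. In other words, (3k+2)·Catalan(k) equals the number of ternary words of length 2k+1 having exactly k letters equal to 2 in which 0 may appear only as the last letter. -/
import Mathlib


open Finset

/-- The set of ternary words of length `m + n` (as functions `Fin (m+n) → Fin 3`)
having exactly `k` letters equal to `2` and no letter equal to `0` among the
first `m` letters. -/
def ternaryWords (m n k : ℕ) : Finset (Fin (m + n) → Fin 3) :=
  univ.filter fun w =>
    (univ.filter fun i => w i = 2).card = k ∧ ∀ i : Fin (m + n), (i : ℕ) < m → w i ≠ 0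

/-- `C m n k` is the number of ternary words of length `m + n` with exactly `k`
twos and no zero among the first `m` letters; it equals the inset number
`{m,n choose k}` of Janjić–Petković. -/
def C (m n k : ℕ) : ℕ := (ternaryWords m n k).card

lemma fin3_eq_one : ∀ x : Fin 3, x ≠ 0 → x ≠ 2 → x = 1 := by decide

lemma countNonzero (n j : ℕ) :
    ((univ : Finset (Fin n → Fin 3)).filter fun u =>
      (univ.filter fun i => u i = 2).card = j ∧ ∀ i, u i ≠ 0).card = n.choose j := by
  have h : n.choose j = (Finset.powersetCard j (univ : Finset (Fin n))).card := by
    rw [Finset.card_powersetCard, card_univ, Fintype.card_fin]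
  rw [h]
  refine Finset.card_bij' (fun w _ => univ.filter fun i => w i = 2)
    (fun s _ => fun i => if i ∈ s then 2 else 1) ?hi ?hj ?left ?right
  case hi =>
    intro w hw
    simp only [mem_filter, mem_univ, true_and] at hw
    simp [Finset.mem_powersetCard_univ, hw.1]
  case hj =>
    intro s hs
    simp only [Finset.mem_powersetCard_univ] at hs
    simp only [mem_filter, mem_univ, true_and]
    constructor
    · rw [← hs]
      congr 1
      ext i
      by_cases h : i ∈ s <;> simp [h]
    · intro i
      by_cases h : i ∈ s <;> simp [h]
  case left =>
    intro w hw
    simp only [mem_filter, mem_univ, true_and] at hw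
    funext i
    by_cases h : w i = 2
    · simp [h]
    · simp only [mem_filter, mem_univ, true_and, h, if_false]
      exact (fin3_eq_one _ (hw.2 i) h).symm
  case right =>
    intro s hs
    ext i
    by_cases h : i ∈ s <;> simp [h]

lemma twos_split (n : ℕ) (w : Fin (n + 1) → Fin 3) :
    (univ.filter fun i => w i = 2).card
      = (univ.filter fun i : Fin n => w i.castSucc = 2).card
        + (if w (Fin.last n) = 2 then 1 else 0) := by
  rw [Finset.card_filter, Finset.card_filter, Fin.sum_univ_castSucc]

lemma fiber (n k : ℕ) (a : Fin 3) :
    ((ternaryWords n 1 k).filter fun w => w (Fin.last n) = a).card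
      = ((univ : Finset (Fin n → Fin 3)).filter fun u =>
          (univ.filter fun i => u i = 2).card + (if a = 2 then 1 else 0) = k
            ∧ ∀ i, u i ≠ 0).card := by
  refine Finset.card_bij' (fun w _ => fun i : Fin n => w i.castSucc)
    (fun u _ => Fin.snoc u a) ?hi ?hj ?left ?right
  case hi =>
    intro w hw
    simp only [ternaryWords, mem_filter, mem_univ, true_and] at hw
    obtain ⟨⟨h1, h2⟩, h3⟩ := hw
    simp only [mem_filter, mem_univ, true_and]
    refine ⟨?_, fun i => h2 i.castSucc (by simp)⟩
    rw [← h3, ← twos_split, h1]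
  case hj =>
    intro u hu
    simp only [mem_filter, mem_univ, true_and] at hu
    simp only [ternaryWords, mem_filter, mem_univ, true_and]
    refine ⟨⟨?_, ?_⟩, by simp⟩
    · rw [twos_split]
      simp only [Fin.snoc_castSucc, Fin.snoc_last]
      exact hu.1
    · intro i hi
      have hne : i ≠ Fin.last n := by
        intro h; rw [h] at hi; simp at hi
      obtain ⟨j, rfl⟩ := Fin.exists_castSucc_eq.2 hne
      rw [Fin.snoc_castSucc]
      exact hu.2 j
  case left =>
    intro w hw
    simp only [mem_filter] at hw
    funext i
    induction i using Fin.lastCases with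
    | last => simp [hw.2]
    | cast j => simp
  case right =>
    intro u hu
    funext i
    simp

theorem stmt_19 (k : ℕ) :
    C (2 * k) 1 k = (3 * k + 2) * catalan k := by
  have hsplit : C (2 * k) 1 k
      = ∑ a : Fin 3, ((ternaryWords (2 * k) 1 k).filter
          fun w => w (Fin.last (2 * k)) = a).card :=
    Finset.card_eq_sum_card_fiberwise (fun w _ => mem_univ _)
  rw [hsplit, Fin.sum_univ_three, fiber, fiber, fiber]
  have h0 : ((univ : Finset (Fin (2 * k) → Fin 3)).filter fun u =>
      (univ.filter fun i => u i = 2).card + (if (0 : Fin 3) = 2 then 1 else 0) = k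
        ∧ ∀ i, u i ≠ 0).card = (2 * k).choose k := by
    rw [← countNonzero (2 * k) k]
    simp
  have h1 : ((univ : Finset (Fin (2 * k) → Fin 3)).filter fun u =>
      (univ.filter fun i => u i = 2).card + (if (1 : Fin 3) = 2 then 1 else 0) = k
        ∧ ∀ i, u i ≠ 0).card = (2 * k).choose k := by
    rw [← countNonzero (2 * k) k]
    simp
  rw [h0, h1]
  obtain _ | k := k
  · have h2 : ((univ : Finset (Fin (2 * 0) → Fin 3)).filter fun u =>
        (univ.filter fun i => u i = 2).card + (if (2 : Fin 3) = 2 then 1 else 0) = 0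
          ∧ ∀ i, u i ≠ 0).card = 0 := by
      simp
    rw [h2]; simp [catalan]
  · have h2 : ((univ : Finset (Fin (2 * (k + 1)) → Fin 3)).filter fun u =>
        (univ.filter fun i => u i = 2).card + (if (2 : Fin 3) = 2 then 1 else 0) = k + 1
          ∧ ∀ i, u i ≠ 0).card = (2 * (k + 1)).choose k := by
      rw [← countNonzero (2 * (k + 1)) k]
      simp
    rw [h2]
    have hB : (k + 1 + 1) * catalan (k + 1) = (2 * (k + 1)).choose (k + 1) := by
      have h := succ_mul_catalan_eq_centralBinom (k + 1)
      rwa [Nat.centralBinom] at h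
    have hD : (2 * (k + 1)).choose (k + 1) * (k + 1)
        = (2 * (k + 1)).choose k * (k + 1 + 1) := by
      have h := Nat.choose_succ_right_eq (2 * (k + 1)) k
      have hsub : 2 * (k + 1) - k = k + 1 + 1 := by clear h hsplit h0 h1 h2; omega
      rwa [hsub] at h
    apply Nat.eq_of_mul_eq_mul_left (show 0 < k + 1 + 1 from Nat.succ_pos _)
    calc (k + 1 + 1) * ((2 * (k + 1)).choose (k + 1) + (2 * (k + 1)).choose (k + 1)
            + (2 * (k + 1)).choose k)
        = 2 * ((k + 1 + 1) * (2 * (k + 1)).choose (k + 1))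
            + (2 * (k + 1)).choose k * (k + 1 + 1) := by ring
      _ = 2 * ((k + 1 + 1) * (2 * (k + 1)).choose (k + 1))
            + (2 * (k + 1)).choose (k + 1) * (k + 1) := by rw [hD]
      _ = (3 * (k + 1) + 2) * ((k + 1 + 1) * catalan (k + 1)) := by rw [hB]; ring
      _ = (k + 1 + 1) * ((3 * (k + 1) + 2) * catalan (k + 1)) := by ring
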